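/- arXiv:1402.6721 — 3 statements merged into one kernel-verified Lean document; each statement's English description precedes it below -/
import Mathlib

section
/- Let τ : ℝ → ℝ be differentiable at θ₀, and let x₋, x₊ : ℝ × ℝ → ℝ be differentiable at (θ₀, τ(θ₀)). Suppose the continuity (matching) condition x₋(θ, τ(θ)) = x₊(θ, τ(θ)) holds for all θ in some neighborhood of θ₀. Then the parameter-sensitivities satisfy the boundary (jump) condition ∂x₊/∂θ(θ₀, τ(θ₀)) = ∂x₋/∂θ(θ₀, τ(θ₀)) + [ ∂x₋/∂t(θ₀, τ(θ₀)) − ∂x₊/∂t(θ₀, τ(θ₀)) ] · τ′(θ₀). -/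
private lemma deriv_fst (f : ℝ × ℝ → ℝ) (a b : ℝ)
    (hf : DifferentiableAt ℝ f (a, b)) :
    HasDerivAt (fun θ => f (θ, b)) (fderiv ℝ f (a, b) (1, 0)) a := by
  have h1 : HasDerivAt (fun θ : ℝ => (θ, b)) ((1 : ℝ), (0 : ℝ)) a := by
    exact HasDerivAt.prodMk (hasDerivAt_id a) (hasDerivAt_const a b)
  exact hf.hasFDerivAt.comp_hasDerivAt a h1

private lemma deriv_snd (f : ℝ × ℝ → ℝ) (a b : ℝ)
    (hf : DifferentiableAt ℝ f (a, b)) :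
    HasDerivAt (fun t => f (a, t)) (fderiv ℝ f (a, b) (0, 1)) b := by
  have h1 : HasDerivAt (fun t : ℝ => (a, t)) ((0 : ℝ), (1 : ℝ)) b :=
    HasDerivAt.prodMk (hasDerivAt_const b a) (hasDerivAt_id b)
  exact hf.hasFDerivAt.comp_hasDerivAt b h1

private lemma myDerivComp (f : ℝ × ℝ → ℝ) (τ : ℝ → ℝ) (θ₀ : ℝ)
    (hτ : DifferentiableAt ℝ τ θ₀)
    (hf : DifferentiableAt ℝ f (θ₀, τ θ₀)) :
    HasDerivAt (fun θ => f (θ, τ θ))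
      (fderiv ℝ f (θ₀, τ θ₀) (1, 0) + fderiv ℝ f (θ₀, τ θ₀) (0, 1) * deriv τ θ₀) θ₀ := by
  have h1 : HasDerivAt (fun θ : ℝ => (θ, τ θ)) ((1 : ℝ), deriv τ θ₀) θ₀ :=
    HasDerivAt.prodMk (hasDerivAt_id θ₀) hτ.hasDerivAt
  have h2 := hf.hasFDerivAt.comp_hasDerivAt θ₀ h1
  have : ((1 : ℝ), deriv τ θ₀) = ((1:ℝ),(0:ℝ)) + deriv τ θ₀ • ((0:ℝ),(1:ℝ)) := by
    simp
  rw [this, map_add, map_smul] at h2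
  simpa [smul_eq_mul, mul_comm, Function.comp_def] using h2

/-- Boundary (jump) condition (eq. (9)) for the parameter sensitivity at an event time:
if the state is continuous across the event, i.e. `xm (θ, τ θ) = xp (θ, τ θ)` near `θ₀`,
then `xp' (τ⁺) = xm' (τ⁻) + [f_{k-1}(τ⁻) − f_k(τ⁺)] · τ'`. -/
theorem stmt_1
    (τ : ℝ → ℝ) (xm xp : ℝ × ℝ → ℝ) (θ₀ : ℝ)
    (hτ : DifferentiableAt ℝ τ θ₀)
    (hm : DifferentiableAt ℝ xm (θ₀, τ θ₀))
    (hp : DifferentiableAt ℝ xp (θ₀, τ θ₀))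
    (hmatch : ∀ᶠ θ in nhds θ₀, xm (θ, τ θ) = xp (θ, τ θ)) :
    deriv (fun θ => xp (θ, τ θ₀)) θ₀ =
      deriv (fun θ => xm (θ, τ θ₀)) θ₀ +
        (deriv (fun t => xm (θ₀, t)) (τ θ₀) - deriv (fun t => xp (θ₀, t)) (τ θ₀)) *
          deriv τ θ₀ := by
  have hcm := myDerivComp xm τ θ₀ hτ hm
  have hcp := myDerivComp xp τ θ₀ hτ hp
  have heq : deriv (fun θ => xm (θ, τ θ)) θ₀ = deriv (fun θ => xp (θ, τ θ)) θ₀ :=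
    Filter.EventuallyEq.deriv_eq hmatch
  rw [hcm.deriv, hcp.deriv] at heq
  rw [(deriv_fst xp θ₀ (τ θ₀) hp).deriv, (deriv_fst xm θ₀ (τ θ₀) hm).deriv,
      (deriv_snd xm θ₀ (τ θ₀) hm).deriv, (deriv_snd xp θ₀ (τ θ₀) hp).deriv]
  linarith
end

section
/- (Sensitivity update at an R2G event occurring during a nonempty period.) Let σ : ℝ → ℝ be differentiable at s₀, and let x₋, x₊ : ℝ × ℝ → ℝ be differentiable at (s₀, σ(s₀)) with x₋(s, σ(s)) = x₊(s, σ(s)) for all s in a neighborhood of s₀. Suppose there are reals α and h such that (∂x₋/∂t)(s₀, σ(s₀)) = α and (∂x₊/∂t)(s₀, σ(s₀)) = α − h. Then (∂x₊/∂s)(s₀, σ(s₀)) = (∂x₋/∂s)(s₀, σ(s₀)) + h · σ′(s₀). -/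
lemma chain_aux (σ : ℝ → ℝ) (f : ℝ × ℝ → ℝ) (s₀ : ℝ)
    (hσ : DifferentiableAt ℝ σ s₀)
    (hf : DifferentiableAt ℝ f (s₀, σ s₀)) :
    deriv (fun s => f (s, σ s)) s₀ =
      deriv (fun s => f (s, σ s₀)) s₀ +
        deriv (fun t => f (s₀, t)) (σ s₀) * deriv σ s₀ := by
  set L := fderiv ℝ f (s₀, σ s₀) with hL
  have hcurve : HasDerivAt (fun s => (s, σ s)) ((1 : ℝ), deriv σ s₀) s₀ :=
    HasDerivAt.prodMk (hasDerivAt_id s₀) hσ.hasDerivAt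
  have h1 : HasDerivAt (fun s => f (s, σ s)) (L (1, deriv σ s₀)) s₀ :=
    hf.hasFDerivAt.comp_hasDerivAt s₀ hcurve
  have hcurve2 : HasDerivAt (fun s : ℝ => (s, σ s₀)) ((1 : ℝ), (0 : ℝ)) s₀ :=
    HasDerivAt.prodMk (hasDerivAt_id s₀) (hasDerivAt_const _ _)
  have h2 : HasDerivAt (fun s => f (s, σ s₀)) (L (1, 0)) s₀ :=
    hf.hasFDerivAt.comp_hasDerivAt s₀ hcurve2
  have hcurve3 : HasDerivAt (fun t : ℝ => (s₀, t)) ((0 : ℝ), (1 : ℝ)) (σ s₀) :=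
    HasDerivAt.prodMk (hasDerivAt_const _ _) (hasDerivAt_id _)
  have h3 : HasDerivAt (fun t => f (s₀, t)) (L (0, 1)) (σ s₀) :=
    hf.hasFDerivAt.comp_hasDerivAt (σ s₀) hcurve3
  rw [h1.deriv, h2.deriv, h3.deriv]
  have : ((1 : ℝ), deriv σ s₀) = (1, 0) + deriv σ s₀ • ((0 : ℝ), (1 : ℝ)) := by
    simp [Prod.ext_iff]
  rw [this, map_add, map_smul]
  ring_nf

/-- Sensitivity update at an `R2G` event during a nonempty period (second case of eq. (16)):
if the state is continuous across the switch, `∂xm/∂t = α` and `∂xp/∂t = α − h` at the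
switching point, then `xp'(σ⁺) = xm'(σ⁻) + h · σ'`. -/
theorem stmt_6
    (σ : ℝ → ℝ) (xm xp : ℝ × ℝ → ℝ) (s₀ α h : ℝ)
    (hσ : DifferentiableAt ℝ σ s₀)
    (hm : DifferentiableAt ℝ xm (s₀, σ s₀))
    (hp : DifferentiableAt ℝ xp (s₀, σ s₀))
    (hmatch : ∀ᶠ s in nhds s₀, xm (s, σ s) = xp (s, σ s))
    (htm : deriv (fun t => xm (s₀, t)) (σ s₀) = α)
    (htp : deriv (fun t => xp (s₀, t)) (σ s₀) = α - h) :
    deriv (fun s => xp (s, σ s₀)) s₀ =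
      deriv (fun s => xm (s, σ s₀)) s₀ + h * deriv σ s₀ := by
  have hderiv_eq : deriv (fun s => xm (s, σ s)) s₀ = deriv (fun s => xp (s, σ s)) s₀ :=
    Filter.EventuallyEq.deriv_eq hmatch
  have em := chain_aux σ xm s₀ hσ hm
  have ep := chain_aux σ xp s₀ hσ hp
  rw [em, ep, htm, htp] at hderiv_eq
  linarith
end

section
/- (IPA estimator for the cost derivative over a nonempty period, equation (19).) Let ξ, η : ℝ → ℝ be differentiable at s₀ with ξ(s₀) < η(s₀), and let x : ℝ × ℝ → ℝ be continuously differentiable on an open set containing {s₀} × [ξ(s₀), η(s₀)], with x(s, ξ(s)) = 0 and x(s, η(s)) = 0 for all s in a neighborhood of s₀. Suppose there is a partition ξ(s₀) = t⁰ < t¹ < ⋯ < t^{J} < t^{J+1} = η(s₀) and reals v₀, v₁, …, v_J such that (∂x/∂s)(s₀, t) = v_j for all t ∈ [t^j, t^{j+1}), j = 0, …, J. Then L(s) = ∫_{ξ(s)}^{η(s)} x(s, t) dt is differentiable at s₀ and L′(s₀) = Σ_{j=0}^{J} v_j · (t^{j+1} − t^j). -/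
open intervalIntegral

open MeasureTheory Set Metric Asymptotics Filter Topology intervalIntegral
open scoped Interval

lemma boundary_zero (x : ℝ × ℝ → ℝ) (φ : ℝ → ℝ) (s₀ : ℝ)
    (hφ : DifferentiableAt ℝ φ s₀)
    (hC : ContDiffAt ℝ 1 x (s₀, φ s₀))
    (h0 : ∀ᶠ s in nhds s₀, x (s, φ s) = 0) :
    HasDerivAt (fun s => ∫ u in (φ s₀)..(φ s), x (s, u)) 0 s₀ := by
  obtain ⟨K, T, hT, hlip⟩ := hC.exists_lipschitzOnWith
  obtain ⟨ρ, ρpos, hball⟩ := Metric.mem_nhds_iff.1 hT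
  have hcont : ContinuousAt φ s₀ := hφ.continuousAt
  have key : ∀ c d uu : ℝ, min c d ≤ uu → uu ≤ max c d →
      |uu - d| ≤ |d - c| ∧ |uu - c| ≤ |d - c| := by
    intro c d uu h1 h2
    rcases le_total c d with h | h
    · rw [min_eq_left h] at h1; rw [max_eq_right h] at h2
      rw [abs_of_nonneg (by linarith : (0:ℝ) ≤ d - c)]
      exact ⟨abs_le.2 ⟨by linarith, by linarith⟩, abs_le.2 ⟨by linarith, by linarith⟩⟩
    · rw [min_eq_right h] at h1; rw [max_eq_left h] at h2
      rw [abs_of_nonpos (by linarith : d - c ≤ 0), neg_sub]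
      exact ⟨abs_le.2 ⟨by linarith, by linarith⟩, abs_le.2 ⟨by linarith, by linarith⟩⟩
  have hev : ∀ᶠ s in 𝓝 s₀, ‖∫ u in (φ s₀)..(φ s), x (s, u)‖ ≤
      (K : ℝ) * ‖(φ s - φ s₀) * (φ s - φ s₀)‖ := by
    have h1 : ∀ᶠ s in 𝓝 s₀, s ∈ Metric.ball s₀ ρ := Metric.ball_mem_nhds s₀ ρpos
    have h2 : ∀ᶠ s in 𝓝 s₀, φ s ∈ Metric.ball (φ s₀) ρ :=
      hcont (Metric.ball_mem_nhds _ ρpos)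
    filter_upwards [h0, h1, h2] with s hx0 hs hφs
    have hsd : dist s s₀ < ρ := Metric.mem_ball.1 hs
    have hφd : dist (φ s) (φ s₀) < ρ := Metric.mem_ball.1 hφs
    have habs : |φ s - φ s₀| < ρ := by rwa [Real.dist_eq] at hφd
    have step : ∀ u ∈ Ι (φ s₀) (φ s), ‖x (s, u)‖ ≤ (K : ℝ) * |φ s - φ s₀| := by
      intro u hu
      have hmin : min (φ s₀) (φ s) ≤ u := le_of_lt hu.1
      have hmax : u ≤ max (φ s₀) (φ s) := hu.2
      obtain ⟨hud, huc⟩ := key (φ s₀) (φ s) u hmin hmax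
      have humem : (s, u) ∈ T := by
        apply hball
        rw [Metric.mem_ball, Prod.dist_eq]
        exact max_lt hsd (by rw [Real.dist_eq]; calc |u - φ s₀| ≤ |φ s - φ s₀| := huc
                                                   _ < ρ := habs)
      have hφmem : (s, φ s) ∈ T := by
        apply hball
        rw [Metric.mem_ball, Prod.dist_eq]
        exact max_lt hsd hφd
      have hdl := hlip.dist_le_mul (s, u) humem (s, φ s) hφmem
      rw [Prod.dist_eq] at hdl
      simp only [dist_self, Real.dist_eq, hx0, sub_zero] at hdl
      rw [sup_eq_right.2 (abs_nonneg (u - φ s))] at hdl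
      rw [Real.norm_eq_abs]
      exact hdl.trans (mul_le_mul_of_nonneg_left hud K.coe_nonneg)
    calc ‖∫ u in (φ s₀)..(φ s), x (s, u)‖
        ≤ (K : ℝ) * |φ s - φ s₀| * |φ s - φ s₀| :=
          intervalIntegral.norm_integral_le_of_norm_le_const step
      _ = (K : ℝ) * ‖(φ s - φ s₀) * (φ s - φ s₀)‖ := by
          rw [Real.norm_eq_abs, abs_mul]; ring
  have hO : (fun s => ∫ u in (φ s₀)..(φ s), x (s, u)) =O[𝓝 s₀]
      fun s => (φ s - φ s₀) * (φ s - φ s₀) := Asymptotics.IsBigO.of_bound _ hev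
  have hφO : (fun s => φ s - φ s₀) =O[𝓝 s₀] fun s => s - s₀ :=
    hφ.hasFDerivAt.isBigO_sub
  have hsq : (fun s : ℝ => (s - s₀) * (s - s₀)) =o[𝓝 s₀] fun s => s - s₀ := by
    have h1 : (fun s : ℝ => s - s₀) =o[𝓝 s₀] fun _ => (1 : ℝ) :=
      Asymptotics.isLittleO_one_iff ℝ |>.2 (by
        have h2 : Filter.Tendsto (fun s : ℝ => s - s₀) (𝓝 s₀) (𝓝 (s₀ - s₀)) :=
          (continuous_id.sub continuous_const).tendsto s₀
        simpa using h2)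
    simpa using h1.mul_isBigO (Asymptotics.isBigO_refl (fun s : ℝ => s - s₀) _)
  have hfin : (fun s => ∫ u in (φ s₀)..(φ s), x (s, u)) =o[𝓝 s₀] fun s => s - s₀ :=
    hO.trans_isLittleO ((hφO.mul hφO).trans_isLittleO hsq)
  rw [hasDerivAt_iff_isLittleO]
  simpa [intervalIntegral.integral_same] using hfin

/-- IPA estimator for the cost derivative over a nonempty period (eq. (19)):
under the hypotheses of the Leibniz rule, if there is a partition
`ξ s₀ = t⁰ < t¹ < ⋯ < t^J < t^{J+1} = η s₀` on whose subintervals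
`[tʲ, tʲ⁺¹)` the sensitivity `∂x/∂s (s₀, ·)` is constant equal to `vⱼ`, then
`L (s) = ∫_{ξ s}^{η s} x (s, t) dt` is differentiable at `s₀` with
`L'(s₀) = Σⱼ vⱼ · (tʲ⁺¹ − tʲ)`. -/
theorem stmt_12
    (ξ η : ℝ → ℝ) (s₀ : ℝ)
    (hξ : DifferentiableAt ℝ ξ s₀) (hη : DifferentiableAt ℝ η s₀)
    (hlt : ξ s₀ < η s₀)
    (x : ℝ × ℝ → ℝ) (V : Set (ℝ × ℝ)) (hV : IsOpen V)
    (hVmem : ({s₀} : Set ℝ) ×ˢ Set.Icc (ξ s₀) (η s₀) ⊆ V)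
    (hx : ContDiffOn ℝ 1 x V)
    (hξ0 : ∀ᶠ s in nhds s₀, x (s, ξ s) = 0)
    (hη0 : ∀ᶠ s in nhds s₀, x (s, η s) = 0)
    (J : ℕ) (t : Fin (J + 2) → ℝ) (v : Fin (J + 1) → ℝ)
    (hmono : StrictMono t)
    (ht0 : t 0 = ξ s₀) (htlast : t (Fin.last (J + 1)) = η s₀)
    (hconst : ∀ j : Fin (J + 1), ∀ u ∈ Set.Ico (t j.castSucc) (t j.succ),
      deriv (fun s => x (s, u)) s₀ = v j) :
    HasDerivAt (fun s => ∫ u in ξ s..η s, x (s, u))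
      (∑ j : Fin (J + 1), v j * (t j.succ - t j.castSucc)) s₀ := by
  classical
  have hab : ξ s₀ ≤ η s₀ := hlt.le
  obtain ⟨U, W, hUo, hWo, hsU, hIW, hUW⟩ :=
    generalized_tube_lemma isCompact_singleton isCompact_Icc hV hVmem
  have hs₀U : s₀ ∈ U := hsU rfl
  obtain ⟨δ, δpos, hδ⟩ := isCompact_Icc.exists_thickening_subset_open hWo hIW
  have hIccW : Set.Icc (ξ s₀ - δ/2) (η s₀ + δ/2) ⊆ W := by
    intro u hu
    apply hδ
    rw [Metric.mem_thickening_iff]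
    refine ⟨max (ξ s₀) (min u (η s₀)),
      ⟨le_max_left _ _, max_le hab (min_le_right _ _)⟩, ?_⟩
    rw [Real.dist_eq]
    rcases le_total u (ξ s₀) with h | h
    · rw [min_eq_left (h.trans hab), max_eq_left h]
      rw [abs_of_nonpos (by linarith)]
      have := hu.1; linarith
    · rcases le_total u (η s₀) with h' | h'
      · rw [min_eq_left h', max_eq_right h]
        simpa using δpos
      · rw [min_eq_right h', max_eq_right hab]
        rw [abs_of_nonneg (by linarith)]
        have := hu.2; linarith
  obtain ⟨ρ, ρpos, hρ⟩ := Metric.isOpen_iff.1 hUo s₀ hs₀U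
  have hIcc_sub : Set.Icc (ξ s₀) (η s₀) ⊆ Set.Icc (ξ s₀ - δ/2) (η s₀ + δ/2) :=
    Set.Icc_subset_Icc (by linarith) (by linarith)
  have hslice : ∀ s ∈ U,
      ContinuousOn (fun u => x (s, u)) (Set.Icc (ξ s₀ - δ/2) (η s₀ + δ/2)) := by
    intro s hs
    exact hx.continuousOn.comp (Continuous.continuousOn (by continuity))
      (fun u hu => hUW ⟨hs, hIccW hu⟩)
  have hfd : ContinuousOn (fderiv ℝ x) V := hx.continuousOn_fderiv_of_isOpen hV le_rfl
  set F' : ℝ → ℝ → ℝ := fun s u => fderiv ℝ x (s, u) (1, 0) with hF'def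
  have hder : ∀ s ∈ U, ∀ u ∈ W, HasDerivAt (fun s' => x (s', u)) (F' s u) s := by
    intro s hs u hu
    have hmem : (s, u) ∈ V := hUW ⟨hs, hu⟩
    have hd : DifferentiableAt ℝ x (s, u) :=
      (hx.differentiableOn one_ne_zero).differentiableAt (hV.mem_nhds hmem)
    have hc : HasDerivAt (fun s' : ℝ => (s', u)) ((1:ℝ), (0:ℝ)) s :=
      (hasDerivAt_id s).prodMk (hasDerivAt_const s u)
    exact hd.hasFDerivAt.comp_hasDerivAt s hc
  have hcompact : IsCompact (Metric.closedBall s₀ (ρ/2) ×ˢ Set.Icc (ξ s₀) (η s₀)) :=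
    (isCompact_closedBall _ _).prod isCompact_Icc
  have hsubV : Metric.closedBall s₀ (ρ/2) ×ˢ Set.Icc (ξ s₀) (η s₀) ⊆ V := by
    rintro ⟨p, q⟩ ⟨hp, hq⟩
    exact hUW ⟨hρ (Metric.closedBall_subset_ball (by linarith) hp), hIW hq⟩
  obtain ⟨M, hM⟩ := hcompact.exists_bound_of_continuousOn (hfd.mono hsubV)
  have hIoc_Icc : Ι (ξ s₀) (η s₀) ⊆ Set.Icc (ξ s₀) (η s₀) := by
    rw [Set.uIoc_of_le hab]; exact Set.Ioc_subset_Icc_self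
  have hF_meas : ∀ᶠ s in 𝓝 s₀, AEStronglyMeasurable (fun u => x (s, u))
      (volume.restrict (Ι (ξ s₀) (η s₀))) := by
    filter_upwards [hUo.mem_nhds hs₀U] with s hs
    exact ((hslice s hs).mono (fun u hu => hIcc_sub (hIoc_Icc hu))).aestronglyMeasurable
      measurableSet_uIoc
  have hF_int : IntervalIntegrable (fun u => x (s₀, u)) volume (ξ s₀) (η s₀) :=
    ((hslice s₀ hs₀U).mono (by rw [Set.uIcc_of_le hab]; exact hIcc_sub)).intervalIntegrable
  have hF'cont : ContinuousOn (F' s₀) (Set.Icc (ξ s₀) (η s₀)) := by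
    have h1 : ContinuousOn (fun u : ℝ => fderiv ℝ x (s₀, u)) (Set.Icc (ξ s₀) (η s₀)) :=
      hfd.comp (Continuous.continuousOn (by continuity))
        (fun u hu => hUW ⟨hs₀U, hIW hu⟩)
    exact h1.clm_apply continuousOn_const
  have hF'_meas : AEStronglyMeasurable (F' s₀) (volume.restrict (Ι (ξ s₀) (η s₀))) :=
    (hF'cont.mono hIoc_Icc).aestronglyMeasurable measurableSet_uIoc
  have hnorm10 : ‖((1:ℝ), (0:ℝ))‖ = 1 := by simp [Prod.norm_def]
  have hbound : ∀ᵐ u ∂volume, u ∈ Ι (ξ s₀) (η s₀) →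
      ∀ s ∈ Metric.ball s₀ (ρ/2), ‖F' s u‖ ≤ M := by
    refine Filter.Eventually.of_forall fun u hu s hs => ?_
    have humem : (s, u) ∈ Metric.closedBall s₀ (ρ/2) ×ˢ Set.Icc (ξ s₀) (η s₀) :=
      ⟨Metric.ball_subset_closedBall hs, hIoc_Icc hu⟩
    calc ‖F' s u‖ ≤ ‖fderiv ℝ x (s, u)‖ * ‖((1:ℝ), (0:ℝ))‖ :=
          (fderiv ℝ x (s, u)).le_opNorm _
      _ = ‖fderiv ℝ x (s, u)‖ := by rw [hnorm10, mul_one]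
      _ ≤ M := hM _ humem
  have hdiff : ∀ᵐ u ∂volume, u ∈ Ι (ξ s₀) (η s₀) →
      ∀ s ∈ Metric.ball s₀ (ρ/2), HasDerivAt (fun s' => x (s', u)) (F' s u) s := by
    refine Filter.Eventually.of_forall fun u hu s hs => ?_
    exact hder s (hρ (Metric.ball_subset_ball (by linarith) hs)) u (hIW (hIoc_Icc hu))
  obtain ⟨-, hA⟩ := intervalIntegral.hasDerivAt_integral_of_dominated_loc_of_deriv_le
    (Metric.ball_mem_nhds s₀ (half_pos ρpos)) hF_meas hF_int hF'_meas hbound intervalIntegrable_const hdiff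
  -- boundary terms
  have hB1 : HasDerivAt (fun s => ∫ u in (ξ s₀)..(ξ s), x (s, u)) 0 s₀ :=
    boundary_zero x ξ s₀ hξ
      (hx.contDiffAt (hV.mem_nhds (hVmem ⟨rfl, Set.left_mem_Icc.2 hab⟩))) hξ0
  have hB2 : HasDerivAt (fun s => ∫ u in (η s₀)..(η s), x (s, u)) 0 s₀ :=
    boundary_zero x η s₀ hη
      (hx.contDiffAt (hV.mem_nhds (hVmem ⟨rfl, Set.right_mem_Icc.2 hab⟩))) hη0
  -- eventual identity
  have hbig : ξ s₀ - δ/2 ≤ η s₀ + δ/2 := by linarith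
  have hevξ : ∀ᶠ s in 𝓝 s₀, ξ s ∈ Set.Icc (ξ s₀ - δ/2) (η s₀ + δ/2) := by
    have h1 : Set.Ioo (ξ s₀ - δ/2) (η s₀ + δ/2) ∈ 𝓝 (ξ s₀) :=
      isOpen_Ioo.mem_nhds ⟨by linarith, by linarith⟩
    filter_upwards [hξ.continuousAt h1] with s hs
    exact Set.Ioo_subset_Icc_self hs
  have hevη : ∀ᶠ s in 𝓝 s₀, η s ∈ Set.Icc (ξ s₀ - δ/2) (η s₀ + δ/2) := by
    have h1 : Set.Ioo (ξ s₀ - δ/2) (η s₀ + δ/2) ∈ 𝓝 (η s₀) :=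
      isOpen_Ioo.mem_nhds ⟨by linarith, by linarith⟩
    filter_upwards [hη.continuousAt h1] with s hs
    exact Set.Ioo_subset_Icc_self hs
  have haI : ξ s₀ ∈ Set.Icc (ξ s₀ - δ/2) (η s₀ + δ/2) := hIcc_sub ⟨le_refl _, hab⟩
  have hbI : η s₀ ∈ Set.Icc (ξ s₀ - δ/2) (η s₀ + δ/2) := hIcc_sub ⟨hab, le_refl _⟩
  have hEq : (fun s => (∫ u in (ξ s₀)..(η s₀), x (s, u))
        - (∫ u in (ξ s₀)..(ξ s), x (s, u)) + (∫ u in (η s₀)..(η s), x (s, u)))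
      =ᶠ[𝓝 s₀] fun s => ∫ u in (ξ s)..(η s), x (s, u) := by
    filter_upwards [hevξ, hevη, hUo.mem_nhds hs₀U] with s hξs hηs hsU
    have hcs := hslice s hsU
    have hint : ∀ p ∈ Set.Icc (ξ s₀ - δ/2) (η s₀ + δ/2),
        ∀ q ∈ Set.Icc (ξ s₀ - δ/2) (η s₀ + δ/2),
        IntervalIntegrable (fun u => x (s, u)) volume p q := by
      intro p hp q hq
      refine (hcs.mono ?_).intervalIntegrable
      rw [← Set.uIcc_of_le hbig] at hp hq ⊢
      exact Set.uIcc_subset_uIcc hp hq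
    have e1 : (∫ u in (ξ s)..(ξ s₀), x (s, u)) + (∫ u in (ξ s₀)..(η s), x (s, u))
        = ∫ u in (ξ s)..(η s), x (s, u) :=
      intervalIntegral.integral_add_adjacent_intervals (hint _ hξs _ haI) (hint _ haI _ hηs)
    have e2 : (∫ u in (ξ s₀)..(η s₀), x (s, u)) + (∫ u in (η s₀)..(η s), x (s, u))
        = ∫ u in (ξ s₀)..(η s), x (s, u) :=
      intervalIntegral.integral_add_adjacent_intervals (hint _ haI _ hbI) (hint _ hbI _ hηs)
    rw [← e1, ← e2, intervalIntegral.integral_symm (ξ s₀) (ξ s)]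
    ring
  have hcomb := (hA.sub hB1).add hB2
  rw [sub_zero, add_zero] at hcomb
  have hL : HasDerivAt (fun s => ∫ u in (ξ s)..(η s), x (s, u))
      (∫ u in (ξ s₀)..(η s₀), F' s₀ u) s₀ := hcomb.congr_of_eventuallyEq hEq.symm
  -- compute the integral of the sensitivity
  suffices h : (∫ u in (ξ s₀)..(η s₀), F' s₀ u)
      = ∑ j : Fin (J + 1), v j * (t j.succ - t j.castSucc) by rwa [h] at hL
  have ht_in : ∀ j : Fin (J + 2), t j ∈ Set.Icc (ξ s₀) (η s₀) := by
    intro j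
    exact ⟨ht0 ▸ hmono.monotone (Fin.zero_le _), htlast ▸ hmono.monotone (Fin.le_last _)⟩
  set tt : ℕ → ℝ := fun k => if h : k < J + 2 then t ⟨k, h⟩ else t (Fin.last _) with htt
  have htt_eq : ∀ k (h : k < J + 2), tt k = t ⟨k, h⟩ := fun k h => dif_pos h
  have hintk : ∀ k < J + 1, IntervalIntegrable (F' s₀) volume (tt k) (tt (k + 1)) := by
    intro k hk
    refine ((hF'cont.mono ?_)).intervalIntegrable
    rw [htt_eq k (by omega), htt_eq (k+1) (by omega), ← Set.uIcc_of_le hab]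
    exact Set.uIcc_subset_uIcc
      (by rw [Set.uIcc_of_le hab]; exact ht_in _)
      (by rw [Set.uIcc_of_le hab]; exact ht_in _)
  have hsum := intervalIntegral.sum_integral_adjacent_intervals (f := F' s₀) hintk
  have h0' : tt 0 = ξ s₀ := by
    rw [htt_eq 0 (by omega), ← ht0]
    congr 1
  have hlast' : tt (J + 1) = η s₀ := by
    rw [htt_eq (J+1) (by omega), ← htlast]
    congr 1
  have hterm : ∀ j : Fin (J + 1),
      (∫ u in (t j.castSucc)..(t j.succ), F' s₀ u) = v j * (t j.succ - t j.castSucc) := by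
    intro j
    have hlt' : t j.castSucc < t j.succ := hmono (Fin.castSucc_lt_succ (i := j))
    have hne : ∀ᵐ u : ℝ, u ≠ t j.succ := by
      rw [MeasureTheory.ae_iff]
      have hset : {u : ℝ | ¬ u ≠ t j.succ} = {t j.succ} := by ext u; simp
      rw [hset]
      exact Real.volume_singleton
    have hcongr : ∀ᵐ u ∂volume, u ∈ Ι (t j.castSucc) (t j.succ) → F' s₀ u = v j := by
      filter_upwards [hne] with u hu hmem
      rw [Set.uIoc_of_le hlt'.le] at hmem
      have hICO : u ∈ Set.Ico (t j.castSucc) (t j.succ) := ⟨hmem.1.le, lt_of_le_of_ne hmem.2 hu⟩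
      have huW : u ∈ W := hIW ⟨(ht_in j.castSucc).1.trans hICO.1,
        hICO.2.le.trans (ht_in j.succ).2⟩
      rw [← hconst j u hICO]
      exact ((hder s₀ hs₀U u huW).deriv).symm
    rw [intervalIntegral.integral_congr_ae hcongr, intervalIntegral.integral_const,
      smul_eq_mul]
    ring
  calc (∫ u in (ξ s₀)..(η s₀), F' s₀ u)
      = ∑ k ∈ Finset.range (J + 1), ∫ u in (tt k)..(tt (k + 1)), F' s₀ u := by
        rw [hsum, h0', hlast']
    _ = ∑ j : Fin (J + 1), v j * (t j.succ - t j.castSucc) := by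
        rw [← Fin.sum_univ_eq_sum_range (fun k => ∫ u in (tt k)..(tt (k + 1)), F' s₀ u)]
        refine Finset.sum_congr rfl fun j _ => ?_
        have hc : tt (j : ℕ) = t j.castSucc := by
          rw [htt_eq (j : ℕ) (by omega)]
          congr 1
        have hsucc : tt ((j : ℕ) + 1) = t j.succ := by
          rw [htt_eq ((j : ℕ) + 1) (by omega)]
          congr 1
        rw [hc, hsucc, hterm j]
end
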